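/- Construction of a solution with unbounded local energy from a sequence of amplified solutions: suppose (φ_n) is a sequence of solutions of a linear equation, with times τ_n → ∞, such that (a) E[φ_n](0) ≤ 2^{-3·2^n}, (b) the local energy satisfies E_loc[φ_n](τ_n) ≥ 2^{2^n}, (c) for m > n, E_loc[φ_m](τ_n) ≤ 2^{-2·2^m}, and (d) for m < n, E_loc[φ_m](τ_n) ≤ 2^{-n} (for all sufficiently large n). Then φ_∞ = Σ_n φ_n converges to a solution of finite initial energy (E[φ_∞](0) ≤ Σ 2^{-3·2^n} < ∞, after noting E^{1/2} is a seminorm), and limsup_{τ→∞} E_loc[φ_∞](τ) = ∞, with E_loc[φ_∞](τ_n) → ∞ along the sequence τ_n. -/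

import Mathlib

open Filter

/-- construction of a solution with unbounded local energy from a sequence
of amplified solutions.  `E` and `Eloc` are nonnegative quadratic energy functionals with
`Eloc ≤ E` whose square roots behave like seminorms (compatibly with the infinite sum
`φ_∞ = Σ_n φ_n`, expressed by the triangle inequality `hsumE` and the reverse triangle
inequality `hrev`).  Given solutions `φ_n` and times `τ_n → ∞` with
(a) `E[φ_n](0) ≤ 2^{-3·2ⁿ}`, (b) `Eloc[φ_n](τ_n) ≥ 2^{2ⁿ}`,
(c) `Eloc[φ_m](τ_n) ≤ 2^{-2·2ᵐ}` for `m > n`, and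
(d) `Eloc[φ_m](τ_n) ≤ 2^{-n}` for `m < n` and all sufficiently large `n`,
the sum `φ_∞` has finite initial energy `E[φ_∞](0) ≤ 1`, while its local energy blows up
along `τ_n`; in particular `limsup_{τ→∞} Eloc[φ_∞](τ) = ∞`. -/
theorem stmt_16 {Sol : Type*}
    (E Eloc : Sol → ℝ → ℝ)
    (φ : ℕ → Sol) (φinf : Sol) (τ : ℕ → ℝ)
    (hnonnegE : ∀ ψ t, 0 ≤ E ψ t)
    (hnonnegEloc : ∀ ψ t, 0 ≤ Eloc ψ t)
    (hle : ∀ ψ t, Eloc ψ t ≤ E ψ t)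
    (hτ : Tendsto τ atTop atTop)
    -- (a) small initial energies
    (ha : ∀ n, E (φ n) 0 ≤ ((2:ℝ) ^ (3 * 2 ^ n))⁻¹)
    -- (b) amplified local energies
    (hb : ∀ n, (2:ℝ) ^ (2 ^ n) ≤ Eloc (φ n) (τ n))
    -- (c) later solutions are still small at time τ_n
    (hc : ∀ m n, n < m → Eloc (φ m) (τ n) ≤ ((2:ℝ) ^ (2 * 2 ^ m))⁻¹)
    -- (d) earlier solutions have dispersed by time τ_n (n large)
    (hd : ∃ N : ℕ, ∀ m n, N ≤ n → m < n → Eloc (φ m) (τ n) ≤ ((2:ℝ) ^ n)⁻¹)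
    -- √E is a seminorm, compatible with the infinite sum φ_∞ = Σ_n φ_n
    (hsumE : Real.sqrt (E φinf 0) ≤ ∑' n, Real.sqrt (E (φ n) 0))
    -- reverse triangle inequality for √Eloc at each time τ_n
    (hrev : ∀ n, Real.sqrt (Eloc (φ n) (τ n)) ≤
      Real.sqrt (Eloc φinf (τ n))
        + ∑' m : {m : ℕ // m ≠ n}, Real.sqrt (Eloc (φ (m : ℕ)) (τ n))) :
    E φinf 0 ≤ 1 ∧
      Tendsto (fun n => Eloc φinf (τ n)) atTop atTop ∧
      (∀ M : ℝ, ∃ᶠ t in atTop, M ≤ Eloc φinf t) := by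

  -- Part 1: E φinf 0 ≤ 1
  have hgeom : Summable fun n : ℕ => ((1:ℝ)/2) ^ n :=
    summable_geometric_of_lt_one (by norm_num) (by norm_num)
  have hbound : ∀ n : ℕ, Real.sqrt (E (φ n) 0) ≤ ((1:ℝ)/2) ^ (n+1) := by
    intro n
    have hnat : 2 * (n + 1) ≤ 3 * 2 ^ n := by
      have h1 := Nat.lt_two_pow_self (n := n)
      have h2 : 1 ≤ 2 ^ n := Nat.one_le_two_pow
      nlinarith
    have h1 : E (φ n) 0 ≤ (((1:ℝ)/2) ^ (n+1)) ^ 2 := by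
      refine (ha n).trans ?_
      rw [← pow_mul, one_div, inv_pow]
      refine inv_anti₀ (by positivity) ?_
      exact pow_le_pow_right₀ (by norm_num) (by omega)
    calc Real.sqrt (E (φ n) 0) ≤ Real.sqrt ((((1:ℝ)/2) ^ (n+1)) ^ 2) :=
          Real.sqrt_le_sqrt h1
      _ = ((1:ℝ)/2) ^ (n+1) := Real.sqrt_sq (by positivity)
  have hsumm : Summable fun n : ℕ => Real.sqrt (E (φ n) 0) := by
    refine Summable.of_nonneg_of_le (fun n => Real.sqrt_nonneg _) hbound ?_
    simpa [pow_succ] using hgeom.mul_right ((1:ℝ)/2)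
  have htsum1 : ∑' n : ℕ, ((1:ℝ)/2) ^ (n+1) = 1 := by
    have : ∑' n : ℕ, ((1:ℝ)/2) ^ (n+1) = (∑' n : ℕ, ((1:ℝ)/2) ^ n) * ((1:ℝ)/2) := by
      simp only [pow_succ]
      exact tsum_mul_right
    rw [this, tsum_geometric_of_lt_one (by norm_num) (by norm_num)]
    norm_num
  have hsq1 : Real.sqrt (E φinf 0) ≤ 1 := by
    refine hsumE.trans ?_
    rw [← htsum1]
    refine Summable.tsum_le_tsum hbound hsumm ?_
    simpa [pow_succ] using hgeom.mul_right ((1:ℝ)/2)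
  have hE1 : E φinf 0 ≤ 1 := by
    have h := Real.sq_sqrt (hnonnegE φinf 0)
    nlinarith [Real.sqrt_nonneg (E φinf 0)]
  -- Part 2: blow-up along τ n
  obtain ⟨N, hN⟩ := hd
  have key : ∀ n : ℕ, max N 3 ≤ n → (n:ℝ) ≤ Eloc φinf (τ n) := by
    intro n hn
    have hnN : N ≤ n := le_trans (le_max_left _ _) hn
    have hn3 : 3 ≤ n := le_trans (le_max_right _ _) hn
    set f : ℕ → ℝ := fun m => Real.sqrt (Eloc (φ m) (τ n)) with hf
    set H : ℕ → ℝ := fun m => ((1:ℝ)/2) ^ m + (if m < n then (1:ℝ) else 0) with hH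
    have hHnonneg : ∀ m, 0 ≤ H m := by
      intro m; simp only [hH]; positivity
    have hind : Summable fun m : ℕ => (if m < n then (1:ℝ) else 0) :=
      summable_of_ne_finset_zero (s := Finset.range n) (by intro b hb; simp at hb ⊢; omega)
    have hHsum : Summable H := hgeom.add hind
    have hfb : ∀ m : ℕ, m ≠ n → f m ≤ H m := by
      intro m hm
      rcases lt_or_gt_of_ne hm with hlt | hgt
      · have h1 : Eloc (φ m) (τ n) ≤ ((2:ℝ) ^ n)⁻¹ := hN m n hnN hlt
        have h2 : f m ≤ 1 := by
          calc f m ≤ Real.sqrt (((2:ℝ) ^ n)⁻¹) := Real.sqrt_le_sqrt h1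
            _ ≤ Real.sqrt 1 := Real.sqrt_le_sqrt (by
                rw [inv_le_one_iff₀]; right; exact one_le_pow₀ (by norm_num))
            _ = 1 := Real.sqrt_one
        simp only [hH, if_pos hlt]
        have : (0:ℝ) ≤ ((1:ℝ)/2) ^ m := by positivity
        linarith
      · have h1 : Eloc (φ m) (τ n) ≤ (((1:ℝ)/2) ^ m) ^ 2 := by
          refine (hc m n hgt).trans ?_
          rw [← pow_mul, one_div, inv_pow]
          refine inv_anti₀ (by positivity) ?_
          refine pow_le_pow_right₀ (by norm_num) ?_
          have := Nat.lt_two_pow_self (n := m)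
          omega
        have h2 : f m ≤ ((1:ℝ)/2) ^ m := by
          calc f m ≤ Real.sqrt ((((1:ℝ)/2) ^ m) ^ 2) := Real.sqrt_le_sqrt h1
            _ = ((1:ℝ)/2) ^ m := Real.sqrt_sq (by positivity)
        simp only [hH]
        split <;> [linarith; simpa using h2]
    have hfsub : Summable fun m : {m : ℕ // m ≠ n} => f (m : ℕ) := by
      refine Summable.of_nonneg_of_le (fun m => Real.sqrt_nonneg _)
        (fun m => hfb m m.2) (hHsum.comp_injective Subtype.val_injective)
    have hS : (∑' m : {m : ℕ // m ≠ n}, f (m : ℕ)) ≤ (n:ℝ) + 2 := by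
      have h1 : (∑' m : {m : ℕ // m ≠ n}, f (m : ℕ)) ≤ ∑' m : ℕ, H m := by
        refine Summable.tsum_le_tsum_of_inj (Subtype.val) Subtype.val_injective
          (fun c _ => hHnonneg c) (fun m => hfb m m.2) hfsub hHsum
      have h2 : ∑' m : ℕ, H m = 2 + (n:ℝ) := by
        rw [hH, Summable.tsum_add hgeom hind, tsum_geometric_of_lt_one (by norm_num) (by norm_num),
          tsum_eq_sum (s := Finset.range n) (by intro b hb; simp at hb ⊢; omega)]
        rw [Finset.sum_congr rfl (fun b hb => if_pos (Finset.mem_range.mp hb))]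
        simp
        norm_num
      rw [h2] at h1; linarith
    -- lower bound on sqrt of local energy of φinf
    have hb' : (2:ℝ) ^ n ≤ Real.sqrt (Eloc (φ n) (τ n)) := by
      have h1 : ((2:ℝ) ^ n) ^ 2 ≤ Eloc (φ n) (τ n) := by
        refine le_trans ?_ (hb n)
        rw [← pow_mul]
        refine pow_le_pow_right₀ (by norm_num) ?_
        obtain ⟨k, rfl⟩ : ∃ k, n = k + 3 := ⟨n - 3, by omega⟩
        have hk := Nat.lt_two_pow_self (n := k)
        have : 2 ^ (k + 3) = 8 * 2 ^ k := by ring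
        nlinarith
      calc (2:ℝ) ^ n = Real.sqrt (((2:ℝ) ^ n) ^ 2) := (Real.sqrt_sq (by positivity)).symm
        _ ≤ Real.sqrt (Eloc (φ n) (τ n)) := Real.sqrt_le_sqrt h1
    have hsqrtlb : (n:ℝ) ≤ Real.sqrt (Eloc φinf (τ n)) := by
      have h1 := hrev n
      have h2 : (2:ℝ) * n + 2 ≤ (2:ℝ) ^ n := by
        have : 2 * n + 2 ≤ 2 ^ n := by
          obtain ⟨k, rfl⟩ : ∃ k, n = k + 3 := ⟨n - 3, by omega⟩
          have hk := Nat.lt_two_pow_self (n := k)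
          have : 2 ^ (k + 3) = 8 * 2 ^ k := by ring
          nlinarith
        calc (2:ℝ) * n + 2 = ((2 * n + 2 : ℕ) : ℝ) := by push_cast; ring
          _ ≤ ((2 ^ n : ℕ) : ℝ) := by exact_mod_cast Nat.cast_le.mpr this
          _ = (2:ℝ) ^ n := by push_cast; ring
      linarith
    have hn1 : (1:ℝ) ≤ (n:ℝ) := by exact_mod_cast Nat.one_le_cast.mpr (by omega)
    have h := Real.sq_sqrt (hnonnegEloc φinf (τ n))
    nlinarith
  have htend : Tendsto (fun n => Eloc φinf (τ n)) atTop atTop := by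
    refine tendsto_atTop_mono' atTop ?_ tendsto_natCast_atTop_atTop
    filter_upwards [eventually_ge_atTop (max N 3)] with n hn using key n hn
  refine ⟨hE1, htend, ?_⟩
  intro M
  rw [frequently_atTop]
  intro T
  obtain ⟨n, hn1, hn2⟩ := ((hτ.eventually_ge_atTop T).and
    (htend.eventually_ge_atTop M)).exists
  exact ⟨τ n, hn1, hn2⟩
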